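/- Orthogonality of trace strata: for 0 ≤ 2k ≤ n and 0 ≤ 2l ≤ n with k ≠ l, the subspaces T^n_k and T^n_l of rank-n Minkowski tensors are orthogonal with respect to the η-pairing: ⟨t, s⟩ = 0 for every t ∈ T^n_k and s ∈ T^n_l. -/
import Mathlib


noncomputable section

open scoped BigOperators

namespace MinkTensors

/-- A real rank-`n` tensor on Minkowski space. -/
abbrev MinkTensor (n : ℕ) : Type := (Fin n → Fin 4) → ℝ

/-- The Minkowski metric `η = diag(1,-1,-1,-1)` (which coincides with its inverse). -/
def η (μ ν : Fin 4) : ℝ := if μ = ν then (if μ = 0 then 1 else -1) else 0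

/-- `Λ` is a Lorentz transformation: `Λᵀ η Λ = η`. -/
def IsLorentz (Λ : Matrix (Fin 4) (Fin 4) ℝ) : Prop :=
  ∀ μ ν, ∑ ρ : Fin 4, ∑ σ : Fin 4, Λ ρ μ * η ρ σ * Λ σ ν = η μ ν

/-- `Λ` belongs to the proper orthochronous Lorentz group `SO⁺(1,3)`. -/
def IsProperOrtho (Λ : Matrix (Fin 4) (Fin 4) ℝ) : Prop :=
  IsLorentz Λ ∧ Λ.det = 1 ∧ 1 ≤ Λ 0 0

/-- The parity transformation `diag(1,-1,-1,-1)`. -/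
def parityMat : Matrix (Fin 4) (Fin 4) ℝ := Matrix.of fun μ ν => η μ ν

/-- The action `t ↦ Λ^{ν₁}{}_{μ₁}···Λ^{ν_n}{}_{μ_n} t_{ν₁...ν_n}` of a matrix on rank-`n`
tensors. -/
def actT {n : ℕ} (Λ : Matrix (Fin 4) (Fin 4) ℝ) (t : MinkTensor n) : MinkTensor n :=
  fun idx => ∑ νs : Fin n → Fin 4, (∏ i, Λ (νs i) (idx i)) * t νs

/-- The tensor is Lorentz covariant (invariant under `SO⁺(1,3)`) and parity invariant. -/
def IsInvariant {n : ℕ} (t : MinkTensor n) : Prop :=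
  (∀ Λ, IsProperOrtho Λ → actT Λ t = t) ∧ actT parityMat t = t

/-- The tensor is traceless: every `η`-contraction of two of its indices vanishes. -/
def Traceless {n : ℕ} (t : MinkTensor n) : Prop :=
  ∀ i j : Fin n, i ≠ j → ∀ idx : Fin n → Fin 4,
    ∑ c : Fin 4, η c c * t (Function.update (Function.update idx i c) j c) = 0

/-- A splitting of the `n` index positions into `k` (ordered) pairs and `n - 2k` remaining
positions; this encodes a partition `{I₀, I₁, ..., I_k}` with `|I₁| = ⋯ = |I_k| = 2`. -/
abbrev PairSplit (n k : ℕ) : Type := (Fin k ⊕ (Fin k ⊕ Fin (n - 2 * k))) ≃ Fin n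

/-- `η_{I₁}···η_{I_k} s_{I₀}` : place `η`-factors at the pairs of the splitting and the
tensor `s` at the remaining positions. -/
def place {n : ℕ} (k : ℕ) (e : PairSplit n k) (s : MinkTensor (n - 2 * k)) :
    MinkTensor n :=
  fun idx =>
    (∏ i : Fin k, η (idx (e (Sum.inl i))) (idx (e (Sum.inr (Sum.inl i))))) *
      s fun j => idx (e (Sum.inr (Sum.inr j)))

/-- The iterated `η`-trace of `t` over the pairs of positions of the splitting. -/
def ctr {n : ℕ} (k : ℕ) (e : PairSplit n k) (t : MinkTensor n) :
    MinkTensor (n - 2 * k) :=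
  fun idx => ∑ c : Fin k → Fin 4,
    (∏ i, η (c i) (c i)) *
      t fun pos =>
        match e.symm pos with
        | Sum.inl i => c i
        | Sum.inr (Sum.inl i) => c i
        | Sum.inr (Sum.inr j) => idx j

/-- The `η`-pairing `⟨t, s⟩ = η^{μ₁ν₁}···η^{μ_nν_n} t_{μ₁...μ_n} s_{ν₁...ν_n}`. -/
def pairing {n : ℕ} (t s : MinkTensor n) : ℝ :=
  ∑ μs : Fin n → Fin 4, ∑ νs : Fin n → Fin 4,
    (∏ i, η (μs i) (νs i)) * t μs * s νs

/-- The trace stratum `T^n_k`: the span of the tensors `η_{I₁}···η_{I_k} s_{I₀}` with `s`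
traceless. -/
def stratum (n k : ℕ) : Submodule ℝ (MinkTensor n) :=
  Submodule.span ℝ
    {t | ∃ (e : PairSplit n k) (s : MinkTensor (n - 2 * k)), Traceless s ∧ t = place k e s}

end MinkTensors

namespace MinkTensors
set_option linter.unusedSectionVars false

lemma η_comm (μ ν : Fin 4) : η μ ν = η ν μ := by
  unfold η; rcases eq_or_ne μ ν with h | h
  · subst h; rfl
  · rw [if_neg h, if_neg (Ne.symm h)]

lemma η_off {μ ν : Fin 4} (h : μ ≠ ν) : η μ ν = 0 := by
  unfold η; rw [if_neg h]

lemma η_sq (c : Fin 4) : η c c * η c c = 1 := by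
  unfold η; simp only [if_pos rfl]
  by_cases h : c = 0 <;> simp [h]

lemma η_delta (v c : Fin 4) : η c c * η v c = if v = c then 1 else 0 := by
  rcases eq_or_ne v c with h | h
  · subst h; rw [if_pos rfl, η_sq]
  · rw [η_off h, mul_zero, if_neg h]

lemma sum_collapse (v : Fin 4) (F : Fin 4 → ℝ) :
    ∑ c : Fin 4, η c c * (η v c * F c) = F v := by
  have : ∀ c : Fin 4, η c c * (η v c * F c) = if v = c then F c else 0 := by
    intro c
    rw [← mul_assoc, η_delta]
    split <;> simp
  rw [Finset.sum_congr rfl fun c _ => this c]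
  simp

lemma sum_eta_sq (F : ℝ) :
    ∑ c : Fin 4, η c c * η c c * F = 4 * F := by
  simp only [η_sq, one_mul, Finset.sum_const, Finset.card_univ, Fintype.card_fin,
    nsmul_eq_mul]
  norm_num

section Gen

variable {ι A B : Type} [Fintype ι] [Fintype A] [Fintype B] [DecidableEq A]

def gplace (f : (A ⊕ (A ⊕ B)) ≃ ι) (b : (B → Fin 4) → ℝ) : (ι → Fin 4) → ℝ :=
  fun idx =>
    (∏ i : A, η (idx (f (Sum.inl i))) (idx (f (Sum.inr (Sum.inl i))))) *
      b fun j => idx (f (Sum.inr (Sum.inr j)))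

def toIdx (e : (A ⊕ (A ⊕ B)) ≃ ι) (c : A → Fin 4) (z : B → Fin 4) : ι → Fin 4 :=
  fun pos =>
    match e.symm pos with
    | Sum.inl i => c i
    | Sum.inr (Sum.inl i) => c i
    | Sum.inr (Sum.inr j) => z j

def gctr (e : (A ⊕ (A ⊕ B)) ≃ ι) (t : (ι → Fin 4) → ℝ) : (B → Fin 4) → ℝ :=
  fun z => ∑ c : A → Fin 4, (∏ i, η (c i) (c i)) * t (toIdx e c z)

def gTraceless {B : Type} [DecidableEq B] (b : (B → Fin 4) → ℝ) : Prop :=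
  ∀ i j : B, i ≠ j → ∀ idx : B → Fin 4,
    ∑ c : Fin 4, η c c * b (Function.update (Function.update idx i c) j c) = 0

@[simp] lemma toIdx_inl (e : (A ⊕ (A ⊕ B)) ≃ ι) (c : A → Fin 4) (z : B → Fin 4) (a : A) :
    toIdx e c z (e (Sum.inl a)) = c a := by
  unfold toIdx; rw [Equiv.symm_apply_apply]

@[simp] lemma toIdx_inr_inl (e : (A ⊕ (A ⊕ B)) ≃ ι) (c : A → Fin 4) (z : B → Fin 4) (a : A) :
    toIdx e c z (e (Sum.inr (Sum.inl a))) = c a := by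
  unfold toIdx; rw [Equiv.symm_apply_apply]

@[simp] lemma toIdx_inr_inr (e : (A ⊕ (A ⊕ B)) ≃ ι) (c : A → Fin 4) (z : B → Fin 4) (j : B) :
    toIdx e c z (e (Sum.inr (Sum.inr j))) = z j := by
  unfold toIdx; rw [Equiv.symm_apply_apply]

/-- If the index position `i` is not one of the two slots of the `e`-pair `a₀`, then
`toIdx` at `i` does not depend on the value of `c` at `a₀`. -/
lemma toIdx_indep (e : (A ⊕ (A ⊕ B)) ≃ ι) (c c' : A → Fin 4) (z : B → Fin 4) (a₀ : A)
    (hcc : ∀ a, a ≠ a₀ → c a = c' a) (i : ι)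
    (h1 : i ≠ e (Sum.inl a₀)) (h2 : i ≠ e (Sum.inr (Sum.inl a₀))) :
    toIdx e c z i = toIdx e c' z i := by
  unfold toIdx
  rcases hsi : e.symm i with a | a | j
  · have : a ≠ a₀ := by
      rintro rfl
      exact h1 (by rw [← hsi, Equiv.apply_symm_apply])
    simp [hcc a this]
  · have : a ≠ a₀ := by
      rintro rfl
      exact h2 (by rw [← hsi, Equiv.apply_symm_apply])
    simp [hcc a this]
  · rfl

/-- Insert a value at position `a₀`. -/
def ins {A : Type} [DecidableEq A] (a₀ : A) (c₀ : Fin 4) (g : {a : A // a ≠ a₀} → Fin 4) :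
    A → Fin 4 :=
  fun a => if h : a = a₀ then c₀ else g ⟨a, h⟩

@[simp] lemma ins_same {A : Type} [DecidableEq A] (a₀ : A) (c₀ : Fin 4)
    (g : {a : A // a ≠ a₀} → Fin 4) : ins a₀ c₀ g a₀ = c₀ := by simp [ins]

lemma ins_ne {A : Type} [DecidableEq A] {a₀ : A} (c₀ : Fin 4)
    (g : {a : A // a ≠ a₀} → Fin 4) {a : A} (h : a ≠ a₀) : ins a₀ c₀ g a = g ⟨a, h⟩ := by
  simp [ins, h]

@[simp] lemma ins_coe {A : Type} [DecidableEq A] {a₀ : A} (c₀ : Fin 4)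
    (g : {a : A // a ≠ a₀} → Fin 4) (a : {a : A // a ≠ a₀}) : ins a₀ c₀ g a.val = g a := by
  rw [ins_ne c₀ g a.prop]

/-- The splitting of functions `A → Fin 4` at a point. -/
def insEquiv {A : Type} [DecidableEq A] (a₀ : A) :
    (Fin 4 × ({a : A // a ≠ a₀} → Fin 4)) ≃ (A → Fin 4) where
  toFun x := ins a₀ x.1 x.2
  invFun c := (c a₀, fun a => c a.val)
  left_inv x := by
    obtain ⟨c₀, g⟩ := x
    refine Prod.ext (by simp) ?_
    funext a
    simp
  right_inv c := by
    funext a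
    by_cases h : a = a₀
    · subst h; simp
    · simp [ins_ne _ _ h]

lemma sum_ins {A : Type} [Fintype A] [DecidableEq A] (a₀ : A) (F : (A → Fin 4) → ℝ) :
    ∑ c : A → Fin 4, F c = ∑ c₀ : Fin 4, ∑ g : {a : A // a ≠ a₀} → Fin 4, F (ins a₀ c₀ g) := by
  rw [← Equiv.sum_comp (insEquiv a₀) F, Fintype.sum_prod_type]
  rfl

lemma prod_split {A : Type} [Fintype A] [DecidableEq A] (a₀ : A) (h : A → ℝ) :
    ∏ a, h a = h a₀ * ∏ a : {a : A // a ≠ a₀}, h a.val := by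
  rw [Fintype.prod_eq_mul_prod_compl a₀]
  congr 1
  exact Finset.prod_subtype _ (by simp) _

/-- Swapping the two members of one pair leaves `gplace` unchanged. -/
lemma gplace_swap {ι A B : Type} [Fintype ι] [Fintype A] [Fintype B] [DecidableEq A]
    [DecidableEq B]
    (f : (A ⊕ (A ⊕ B)) ≃ ι) (α₀ : A) (b : (B → Fin 4) → ℝ) :
    gplace ((Equiv.swap (Sum.inl α₀) (Sum.inr (Sum.inl α₀))).trans f) b = gplace f b := by
  funext idx
  unfold gplace
  have h2 : (fun j => idx (((Equiv.swap (Sum.inl α₀) (Sum.inr (Sum.inl α₀))).trans f)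
      (Sum.inr (Sum.inr j)))) = fun j => idx (f (Sum.inr (Sum.inr j))) := by
    funext j
    rw [Equiv.trans_apply, Equiv.swap_apply_of_ne_of_ne (by simp) (by simp)]
  rw [h2]
  congr 1
  refine Finset.prod_congr rfl fun α _ => ?_
  by_cases h : α = α₀
  · subst h
    simp only [Equiv.trans_apply, Equiv.swap_apply_left, Equiv.swap_apply_right]
    exact η_comm _ _
  · rw [Equiv.trans_apply, Equiv.trans_apply,
      Equiv.swap_apply_of_ne_of_ne (by simp [h]) (by simp),
      Equiv.swap_apply_of_ne_of_ne (by simp) (by simp [h])]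

/-- Swapping the two members of one pair leaves `gctr` unchanged. -/
lemma gctr_swap {ι A B : Type} [Fintype ι] [Fintype A] [Fintype B] [DecidableEq A]
    [DecidableEq B]
    (e : (A ⊕ (A ⊕ B)) ≃ ι) (a₀ : A) (t : (ι → Fin 4) → ℝ) :
    gctr ((Equiv.swap (Sum.inl a₀) (Sum.inr (Sum.inl a₀))).trans e) t = gctr e t := by
  funext z
  unfold gctr
  refine Finset.sum_congr rfl fun c _ => ?_
  congr 1
  congr 1
  funext i
  unfold toIdx
  rw [Equiv.symm_trans_apply, Equiv.symm_swap]
  rcases hsi : e.symm i with a | a | j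
  · by_cases h : a = a₀
    · subst h; simp [Equiv.swap_apply_left]
    · rw [Equiv.swap_apply_of_ne_of_ne (by simp [h]) (by simp)]
  · by_cases h : a = a₀
    · subst h; simp [Equiv.swap_apply_right]
    · rw [Equiv.swap_apply_of_ne_of_ne (by simp) (by simp [h])]
  · rw [Equiv.swap_apply_of_ne_of_ne (by simp) (by simp)]

/-- Removing one pair from the index type of a pairing structure. -/
def sumNeEquiv {A B : Type} [DecidableEq A] (a₀ : A) :
    ({a : A // a ≠ a₀} ⊕ ({a : A // a ≠ a₀} ⊕ B)) ≃
      {z : A ⊕ (A ⊕ B) // z ≠ Sum.inl a₀ ∧ z ≠ Sum.inr (Sum.inl a₀)} where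
  toFun w :=
    match w with
    | Sum.inl a => ⟨Sum.inl a.val, by simp [a.prop]⟩
    | Sum.inr (Sum.inl a) => ⟨Sum.inr (Sum.inl a.val), by simp [a.prop]⟩
    | Sum.inr (Sum.inr b) => ⟨Sum.inr (Sum.inr b), by simp⟩
  invFun w :=
    match w with
    | ⟨Sum.inl a, h⟩ => Sum.inl ⟨a, fun he => h.1 (by rw [he])⟩
    | ⟨Sum.inr (Sum.inl a), h⟩ => Sum.inr (Sum.inl ⟨a, fun he => h.2 (by rw [he])⟩)
    | ⟨Sum.inr (Sum.inr b), _⟩ => Sum.inr (Sum.inr b)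
  left_inv w := by rcases w with ⟨a, ha⟩ | ⟨a, ha⟩ | b <;> rfl
  right_inv w := by rcases w with ⟨a | a | b, h⟩ <;> rfl

@[simp] lemma sumNeEquiv_inl {A B : Type} [DecidableEq A] (a₀ : A) (a : {a : A // a ≠ a₀}) :
    ((sumNeEquiv (B := B) a₀) (Sum.inl a)).val = Sum.inl a.val := rfl

@[simp] lemma sumNeEquiv_inr_inl {A B : Type} [DecidableEq A] (a₀ : A) (a : {a : A // a ≠ a₀}) :
    ((sumNeEquiv (B := B) a₀) (Sum.inr (Sum.inl a))).val = Sum.inr (Sum.inl a.val) := rfl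

@[simp] lemma sumNeEquiv_inr_inr {A B : Type} [DecidableEq A] (a₀ : A) (b : B) :
    ((sumNeEquiv (A := A) a₀) (Sum.inr (Sum.inr b))).val = Sum.inr (Sum.inr b) := rfl

section Main

variable {ι A B A' B' : Type} [Fintype ι] [DecidableEq ι] [Fintype A] [DecidableEq A]
  [Fintype B] [Fintype A'] [DecidableEq A'] [Fintype B'] [DecidableEq B']

lemma gctr_gplace_kill (e : (A ⊕ (A ⊕ B)) ≃ ι) (f : (A' ⊕ (A' ⊕ B')) ≃ ι)
    (b : (B' → Fin 4) → ℝ) (hb : gTraceless b) (a₀ : A) (β₁ β₂ : B')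
    (h1 : e (Sum.inl a₀) = f (Sum.inr (Sum.inr β₁)))
    (h2 : e (Sum.inr (Sum.inl a₀)) = f (Sum.inr (Sum.inr β₂)))
    (z : B → Fin 4) :
    gctr e (gplace f b) z = 0 := by
  have hne : β₁ ≠ β₂ := by
    rintro rfl
    rw [← h2] at h1
    exact Sum.inl_ne_inr (e.injective h1)
  unfold gctr
  rw [sum_ins a₀, Finset.sum_comm]
  refine Finset.sum_eq_zero fun g _ => ?_
  set base : B' → Fin 4 := fun β => toIdx e (ins a₀ 0 g) z (f (Sum.inr (Sum.inr β))) with hbase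
  have hindep : ∀ (c₀ : Fin 4) (i : ι), i ≠ e (Sum.inl a₀) → i ≠ e (Sum.inr (Sum.inl a₀)) →
      toIdx e (ins a₀ c₀ g) z i = toIdx e (ins a₀ 0 g) z i := by
    intro c₀ i hi1 hi2
    exact toIdx_indep e _ _ z a₀ (fun a ha => by rw [ins_ne _ _ ha, ins_ne _ _ ha]) i hi1 hi2
  have hupd : ∀ c₀ : Fin 4, (fun β => toIdx e (ins a₀ c₀ g) z (f (Sum.inr (Sum.inr β)))) =
      Function.update (Function.update base β₁ c₀) β₂ c₀ := by
    intro c₀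
    funext β
    by_cases hβ2 : β = β₂
    · subst hβ2
      rw [Function.update_self, ← h2, toIdx_inr_inl, ins_same]
    · rw [Function.update_of_ne hβ2]
      by_cases hβ1 : β = β₁
      · subst hβ1
        rw [Function.update_self, ← h1, toIdx_inl, ins_same]
      · rw [Function.update_of_ne hβ1]
        refine hindep c₀ _ ?_ ?_
        · rw [h1]; exact fun h => hβ1 (by simpa using f.injective h)
        · rw [h2]; exact fun h => hβ2 (by simpa using f.injective h)
  have hQ : ∀ c₀ : Fin 4, gplace f b (toIdx e (ins a₀ c₀ g) z) =
      (∏ α : A', η (toIdx e (ins a₀ 0 g) z (f (Sum.inl α)))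
        (toIdx e (ins a₀ 0 g) z (f (Sum.inr (Sum.inl α))))) *
      b (Function.update (Function.update base β₁ c₀) β₂ c₀) := by
    intro c₀
    unfold gplace
    rw [hupd c₀]
    congr 1
    refine Finset.prod_congr rfl fun α _ => ?_
    rw [hindep c₀ _ (by rw [h1]; simp) (by rw [h2]; simp),
        hindep c₀ _ (by rw [h1]; simp) (by rw [h2]; simp)]
  have hsummand : ∀ c₀ : Fin 4,
      (∏ a, η (ins a₀ c₀ g a) (ins a₀ c₀ g a)) * gplace f b (toIdx e (ins a₀ c₀ g) z) =
      ((∏ a : {a : A // a ≠ a₀}, η (g a) (g a)) *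
        (∏ α : A', η (toIdx e (ins a₀ 0 g) z (f (Sum.inl α)))
          (toIdx e (ins a₀ 0 g) z (f (Sum.inr (Sum.inl α)))))) *
        (η c₀ c₀ * b (Function.update (Function.update base β₁ c₀) β₂ c₀)) := by
    intro c₀
    rw [hQ c₀, prod_split a₀]
    simp only [ins_same, ins_coe]
    ring
  rw [Finset.sum_congr rfl fun c₀ _ => hsummand c₀, ← Finset.mul_sum,
    hb β₁ β₂ hne base, mul_zero]

lemma gctr_gplace_glue (e : (A ⊕ (A ⊕ B)) ≃ ι) (f : (A' ⊕ (A' ⊕ B')) ≃ ι)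
    (b : (B' → Fin 4) → ℝ) (a₀ : A) (α₀ : A')
    (hq : e (Sum.inr (Sum.inl a₀)) = f (Sum.inr (Sum.inl α₀)))
    (hp : f (Sum.inl α₀) ≠ e (Sum.inl a₀)) (z : B → Fin 4) :
    ∃ (e' : ({a : A // a ≠ a₀} ⊕ ({a : A // a ≠ a₀} ⊕ B)) ≃
        {i : ι // i ≠ e (Sum.inr (Sum.inl a₀)) ∧ i ≠ f (Sum.inl α₀)})
      (f' : ({α : A' // α ≠ α₀} ⊕ ({α : A' // α ≠ α₀} ⊕ B')) ≃
        {i : ι // i ≠ e (Sum.inr (Sum.inl a₀)) ∧ i ≠ f (Sum.inl α₀)}),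
      gctr e (gplace f b) z = gctr e' (gplace f' b) z := by
  have hpq : e (Sum.inl a₀) ≠ e (Sum.inr (Sum.inl a₀)) := by simp
  have hq'q : f (Sum.inl α₀) ≠ e (Sum.inr (Sum.inl a₀)) := by rw [hq]; simp
  set p := e (Sum.inl a₀) with hp_def
  set q := e (Sum.inr (Sum.inl a₀)) with hq_def
  set q' := f (Sum.inl α₀) with hq'_def
  set sw := Equiv.swap p q' with hsw_def
  have hswq : sw q = q := Equiv.swap_apply_of_ne_of_ne (Ne.symm hpq) (Ne.symm hq'q)
  have hsw : ∀ i : ι, (i ≠ p ∧ i ≠ q) ↔ (sw i ≠ q ∧ sw i ≠ q') := by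
    intro i
    constructor
    · rintro ⟨h1, h2⟩
      constructor
      · rw [Ne, Equiv.swap_apply_eq_iff, hswq]; exact h2
      · rw [Ne, Equiv.swap_apply_eq_iff, Equiv.swap_apply_right]; exact h1
    · rintro ⟨h1, h2⟩
      rw [Ne, Equiv.swap_apply_eq_iff, hswq] at h1
      rw [Ne, Equiv.swap_apply_eq_iff, Equiv.swap_apply_right] at h2
      exact ⟨h2, h1⟩
  have he : ∀ w : A ⊕ (A ⊕ B), (w ≠ Sum.inl a₀ ∧ w ≠ Sum.inr (Sum.inl a₀)) ↔
      (e w ≠ p ∧ e w ≠ q) := by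
    intro w
    simp [hp_def, hq_def]
  have hf : ∀ w : A' ⊕ (A' ⊕ B'), (w ≠ Sum.inl α₀ ∧ w ≠ Sum.inr (Sum.inl α₀)) ↔
      (f w ≠ q ∧ f w ≠ q') := by
    intro w
    rw [hq'_def, hq]
    simp [and_comm]
  set e' := (sumNeEquiv a₀).trans ((e.subtypeEquiv he).trans (Equiv.subtypeEquiv (p := fun i => i ≠ p ∧ i ≠ q) (q := fun i => i ≠ q ∧ i ≠ q') sw hsw)) with he'_def
  set f' := (sumNeEquiv α₀).trans (Equiv.subtypeEquiv (q := fun i => i ≠ q ∧ i ≠ q') f hf) with hf'_def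
  refine ⟨e', f', ?_⟩
  have hindep : ∀ (c₀ c₀' : Fin 4) (g : {a : A // a ≠ a₀} → Fin 4) (i : ι),
      i ≠ p → i ≠ q → toIdx e (ins a₀ c₀ g) z i = toIdx e (ins a₀ c₀' g) z i := by
    intro c₀ c₀' g i h1 h2
    exact toIdx_indep e _ _ z a₀ (fun a ha => by rw [ins_ne _ _ ha, ins_ne _ _ ha]) i h1 h2
  set V : ({a : A // a ≠ a₀} → Fin 4) → Fin 4 := fun g => toIdx e (ins a₀ 0 g) z q' with hV_def
  have RHSval : ∀ (g : {a : A // a ≠ a₀} → Fin 4) (y : ι), y ≠ p → y ≠ q →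
      toIdx e (ins a₀ (V g) g) z (sw y) = toIdx e (ins a₀ 0 g) z y := by
    intro g y hyp hyq
    by_cases hy : y = q'
    · rw [hy, Equiv.swap_apply_right, hp_def, toIdx_inl, ins_same, hV_def]
    · rw [Equiv.swap_apply_of_ne_of_ne hyp hy]
      exact hindep _ _ g y hyp hyq
  have L : ∀ (g : {a : A // a ≠ a₀} → Fin 4) (j : {i : ι // i ≠ q ∧ i ≠ q'}),
      toIdx e' g z j = toIdx e (ins a₀ (V g) g) z j.val := by
    intro g j
    obtain ⟨w, rfl⟩ := e'.surjective j
    have hval : ∀ w', (e' w').val = sw (e ((sumNeEquiv (B := B) a₀ w').val)) := by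
      intro w'
      rw [he'_def]
      simp [Equiv.subtypeEquiv_apply]
    rcases w with a | a | j
    · rw [toIdx_inl, hval, sumNeEquiv_inl,
        RHSval g _ (by simp [hp_def, a.prop]) (by simp [hq_def]),
        toIdx_inl, ins_coe]
    · rw [toIdx_inr_inl, hval, sumNeEquiv_inr_inl,
        RHSval g _ (by simp [hp_def]) (by simp [hq_def, a.prop]),
        toIdx_inr_inl, ins_coe]
    · rw [toIdx_inr_inr, hval, sumNeEquiv_inr_inr,
        RHSval g _ (by simp [hp_def]) (by simp [hq_def]),
        toIdx_inr_inr]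
  have hf'slots : ∀ (α : {α : A' // α ≠ α₀}), ((f' (Sum.inl α)).val = f (Sum.inl α.val)) ∧
      ((f' (Sum.inr (Sum.inl α))).val = f (Sum.inr (Sum.inl α.val))) := by
    intro α
    rw [hf'_def]
    constructor <;> simp [Equiv.subtypeEquiv_apply]
  have hf'b : ∀ (β : B'), (f' (Sum.inr (Sum.inr β))).val = f (Sum.inr (Sum.inr β)) := by
    intro β
    rw [hf'_def]
    simp [Equiv.subtypeEquiv_apply]
  -- main computation
  unfold gctr
  rw [sum_ins a₀, Finset.sum_comm]
  refine Finset.sum_congr rfl fun g _ => ?_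
  set F : Fin 4 → ℝ := fun c₀ =>
    (∏ α : {α : A' // α ≠ α₀}, η (toIdx e (ins a₀ c₀ g) z (f (Sum.inl α.val)))
        (toIdx e (ins a₀ c₀ g) z (f (Sum.inr (Sum.inl α.val))))) *
      b (fun β => toIdx e (ins a₀ c₀ g) z (f (Sum.inr (Sum.inr β)))) with hF_def
  have hsummand : ∀ c₀ : Fin 4,
      (∏ a, η (ins a₀ c₀ g a) (ins a₀ c₀ g a)) * gplace f b (toIdx e (ins a₀ c₀ g) z) =
      (∏ a : {a : A // a ≠ a₀}, η (g a) (g a)) * (η c₀ c₀ * (η (V g) c₀ * F c₀)) := by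
    intro c₀
    unfold gplace
    rw [prod_split a₀ (fun a => η (ins a₀ c₀ g a) (ins a₀ c₀ g a)),
      prod_split α₀ (fun α => η (toIdx e (ins a₀ c₀ g) z (f (Sum.inl α)))
        (toIdx e (ins a₀ c₀ g) z (f (Sum.inr (Sum.inl α)))))]
    simp only [ins_same, ins_coe]
    have h1 : toIdx e (ins a₀ c₀ g) z (f (Sum.inr (Sum.inl α₀))) = c₀ := by
      rw [← hq, hq_def, toIdx_inr_inl, ins_same]
    have h2 : toIdx e (ins a₀ c₀ g) z (f (Sum.inl α₀)) = V g := by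
      rw [← hq'_def, hindep c₀ 0 g q' hp hq'q, hV_def]
    rw [h1, h2, hF_def]
    ring
  rw [Finset.sum_congr rfl fun c₀ _ => hsummand c₀, ← Finset.mul_sum, sum_collapse (V g) F]
  have hFV : F (V g) = gplace f' b (toIdx e' g z) := by
    simp only [hF_def]
    unfold gplace
    have hprod : (∏ α : {α : A' // α ≠ α₀}, η (toIdx e' g z (f' (Sum.inl α)))
        (toIdx e' g z (f' (Sum.inr (Sum.inl α))))) =
        ∏ α : {α : A' // α ≠ α₀}, η (toIdx e (ins a₀ (V g) g) z (f (Sum.inl α.val)))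
          (toIdx e (ins a₀ (V g) g) z (f (Sum.inr (Sum.inl α.val)))) := by
      refine Finset.prod_congr rfl fun α _ => ?_
      rw [L g (f' (Sum.inl α)), L g (f' (Sum.inr (Sum.inl α))), (hf'slots α).1, (hf'slots α).2]
    have hbarg : (fun β => toIdx e' g z (f' (Sum.inr (Sum.inr β)))) =
        fun β => toIdx e (ins a₀ (V g) g) z (f (Sum.inr (Sum.inr β))) := by
      funext β
      rw [L g (f' (Sum.inr (Sum.inr β))), hf'b β]
    rw [hprod, hbarg]
  rw [hFV]

lemma gctr_gplace_samePair (e : (A ⊕ (A ⊕ B)) ≃ ι) (f : (A' ⊕ (A' ⊕ B')) ≃ ι)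
    (b : (B' → Fin 4) → ℝ) (a₀ : A) (α₀ : A')
    (hq : e (Sum.inr (Sum.inl a₀)) = f (Sum.inr (Sum.inl α₀)))
    (hp : f (Sum.inl α₀) = e (Sum.inl a₀)) (z : B → Fin 4) :
    ∃ (e' : ({a : A // a ≠ a₀} ⊕ ({a : A // a ≠ a₀} ⊕ B)) ≃
        {i : ι // i ≠ e (Sum.inr (Sum.inl a₀)) ∧ i ≠ e (Sum.inl a₀)})
      (f' : ({α : A' // α ≠ α₀} ⊕ ({α : A' // α ≠ α₀} ⊕ B')) ≃
        {i : ι // i ≠ e (Sum.inr (Sum.inl a₀)) ∧ i ≠ e (Sum.inl a₀)}),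
      gctr e (gplace f b) z = 4 * gctr e' (gplace f' b) z := by
  set p := e (Sum.inl a₀) with hp_def
  set q := e (Sum.inr (Sum.inl a₀)) with hq_def
  have he : ∀ w : A ⊕ (A ⊕ B), (w ≠ Sum.inl a₀ ∧ w ≠ Sum.inr (Sum.inl a₀)) ↔
      (e w ≠ q ∧ e w ≠ p) := by
    intro w
    simp [hp_def, hq_def, and_comm]
  have hf : ∀ w : A' ⊕ (A' ⊕ B'), (w ≠ Sum.inl α₀ ∧ w ≠ Sum.inr (Sum.inl α₀)) ↔
      (f w ≠ q ∧ f w ≠ p) := by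
    intro w
    rw [← hp, hq]
    simp [and_comm]
  set e' := (sumNeEquiv a₀).trans (Equiv.subtypeEquiv (q := fun i => i ≠ q ∧ i ≠ p) e he)
    with he'_def
  set f' := (sumNeEquiv α₀).trans (Equiv.subtypeEquiv (q := fun i => i ≠ q ∧ i ≠ p) f hf)
    with hf'_def
  refine ⟨e', f', ?_⟩
  have hindep : ∀ (c₀ c₀' : Fin 4) (g : {a : A // a ≠ a₀} → Fin 4) (i : ι),
      i ≠ p → i ≠ q → toIdx e (ins a₀ c₀ g) z i = toIdx e (ins a₀ c₀' g) z i := by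
    intro c₀ c₀' g i h1 h2
    exact toIdx_indep e _ _ z a₀ (fun a ha => by rw [ins_ne _ _ ha, ins_ne _ _ ha]) i h1 h2
  have L : ∀ (g : {a : A // a ≠ a₀} → Fin 4) (j : {i : ι // i ≠ q ∧ i ≠ p}),
      toIdx e' g z j = toIdx e (ins a₀ 0 g) z j.val := by
    intro g j
    obtain ⟨w, rfl⟩ := e'.surjective j
    have hval : ∀ w', (e' w').val = e ((sumNeEquiv (B := B) a₀ w').val) := by
      intro w'
      rw [he'_def]
      simp [Equiv.subtypeEquiv_apply]
    rcases w with a | a | j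
    · rw [toIdx_inl, hval, sumNeEquiv_inl, toIdx_inl, ins_coe]
    · rw [toIdx_inr_inl, hval, sumNeEquiv_inr_inl, toIdx_inr_inl, ins_coe]
    · rw [toIdx_inr_inr, hval, sumNeEquiv_inr_inr, toIdx_inr_inr]
  have hf'slots : ∀ (α : {α : A' // α ≠ α₀}), ((f' (Sum.inl α)).val = f (Sum.inl α.val)) ∧
      ((f' (Sum.inr (Sum.inl α))).val = f (Sum.inr (Sum.inl α.val))) := by
    intro α
    rw [hf'_def]
    constructor <;> simp [Equiv.subtypeEquiv_apply]
  have hf'b : ∀ (β : B'), (f' (Sum.inr (Sum.inr β))).val = f (Sum.inr (Sum.inr β)) := by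
    intro β
    rw [hf'_def]
    simp [Equiv.subtypeEquiv_apply]
  unfold gctr
  rw [sum_ins a₀, Finset.sum_comm, Finset.mul_sum]
  refine Finset.sum_congr rfl fun g _ => ?_
  have hsummand : ∀ c₀ : Fin 4,
      (∏ a, η (ins a₀ c₀ g a) (ins a₀ c₀ g a)) * gplace f b (toIdx e (ins a₀ c₀ g) z) =
      η c₀ c₀ * η c₀ c₀ * ((∏ a : {a : A // a ≠ a₀}, η (g a) (g a)) *
        ((∏ α : {α : A' // α ≠ α₀}, η (toIdx e (ins a₀ 0 g) z (f (Sum.inl α.val)))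
            (toIdx e (ins a₀ 0 g) z (f (Sum.inr (Sum.inl α.val))))) *
          b (fun β => toIdx e (ins a₀ 0 g) z (f (Sum.inr (Sum.inr β)))))) := by
    intro c₀
    unfold gplace
    rw [prod_split a₀ (fun a => η (ins a₀ c₀ g a) (ins a₀ c₀ g a)),
      prod_split α₀ (fun α => η (toIdx e (ins a₀ c₀ g) z (f (Sum.inl α)))
        (toIdx e (ins a₀ c₀ g) z (f (Sum.inr (Sum.inl α)))))]
    simp only [ins_same, ins_coe]
    have h1 : toIdx e (ins a₀ c₀ g) z (f (Sum.inr (Sum.inl α₀))) = c₀ := by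
      rw [← hq, hq_def, toIdx_inr_inl, ins_same]
    have h2 : toIdx e (ins a₀ c₀ g) z (f (Sum.inl α₀)) = c₀ := by
      rw [hp, hp_def, toIdx_inl, ins_same]
    have h3 : (∏ α : {α : A' // α ≠ α₀}, η (toIdx e (ins a₀ c₀ g) z (f (Sum.inl α.val)))
        (toIdx e (ins a₀ c₀ g) z (f (Sum.inr (Sum.inl α.val))))) =
        ∏ α : {α : A' // α ≠ α₀}, η (toIdx e (ins a₀ 0 g) z (f (Sum.inl α.val)))
          (toIdx e (ins a₀ 0 g) z (f (Sum.inr (Sum.inl α.val)))) := by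
      refine Finset.prod_congr rfl fun α _ => ?_
      rw [hindep c₀ 0 g _ (by rw [← hp]; simp [α.prop]) (by rw [hq]; simp),
        hindep c₀ 0 g _ (by rw [← hp]; simp) (by rw [hq]; simp [α.prop])]
    have h4 : (fun β => toIdx e (ins a₀ c₀ g) z (f (Sum.inr (Sum.inr β)))) =
        fun β => toIdx e (ins a₀ 0 g) z (f (Sum.inr (Sum.inr β))) := by
      funext β
      exact hindep c₀ 0 g _ (by rw [← hp]; simp) (by rw [hq]; simp)
    rw [h1, h2, h3, h4]
    ring
  rw [Finset.sum_congr rfl fun c₀ _ => hsummand c₀, sum_eta_sq]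
  congr 1
  have hgp : gplace f' b (toIdx e' g z) =
      (∏ α : {α : A' // α ≠ α₀}, η (toIdx e (ins a₀ 0 g) z (f (Sum.inl α.val)))
        (toIdx e (ins a₀ 0 g) z (f (Sum.inr (Sum.inl α.val))))) *
      b (fun β => toIdx e (ins a₀ 0 g) z (f (Sum.inr (Sum.inr β)))) := by
    unfold gplace
    have hprod : (∏ α : {α : A' // α ≠ α₀}, η (toIdx e' g z (f' (Sum.inl α)))
        (toIdx e' g z (f' (Sum.inr (Sum.inl α))))) =
        ∏ α : {α : A' // α ≠ α₀}, η (toIdx e (ins a₀ 0 g) z (f (Sum.inl α.val)))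
          (toIdx e (ins a₀ 0 g) z (f (Sum.inr (Sum.inl α.val)))) := by
      refine Finset.prod_congr rfl fun α _ => ?_
      rw [L g (f' (Sum.inl α)), L g (f' (Sum.inr (Sum.inl α))), (hf'slots α).1, (hf'slots α).2]
    have hbarg : (fun β => toIdx e' g z (f' (Sum.inr (Sum.inr β)))) =
        fun β => toIdx e (ins a₀ 0 g) z (f (Sum.inr (Sum.inr β))) := by
      funext β
      rw [L g (f' (Sum.inr (Sum.inr β))), hf'b β]
    rw [hprod, hbarg]
  rw [hgp]

lemma card_ne {X : Type} [Fintype X] [DecidableEq X] (x : X) :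
    Fintype.card {y : X // y ≠ x} = Fintype.card X - 1 := by
  have : Fintype.card {y : X // y ≠ x} = Fintype.card X - Fintype.card {y : X // y = x} := by
    exact Fintype.card_subtype_compl _
  rw [this, Fintype.card_subtype_eq]

lemma key_induction : ∀ (N : ℕ) (ι A B A' B' : Type) [Fintype ι] [DecidableEq ι] [Fintype A]
    [DecidableEq A] [Fintype B] [DecidableEq B] [Fintype A'] [DecidableEq A'] [Fintype B']
    [DecidableEq B']
    (e : (A ⊕ (A ⊕ B)) ≃ ι) (f : (A' ⊕ (A' ⊕ B')) ≃ ι) (b : (B' → Fin 4) → ℝ),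
    gTraceless b → Fintype.card A' ≤ N → Fintype.card A' < Fintype.card A →
    ∀ z : B → Fin 4, gctr e (gplace f b) z = 0 := by
  intro N
  induction N with
  | zero =>
    intro ι A B A' B' _ _ _ _ _ _ _ _ _ _ e f b hb hN hAA z
    have hA' : IsEmpty A' := by
      rw [← Fintype.card_eq_zero_iff]
      omega
    obtain ⟨a₀⟩ : Nonempty A := by
      rw [← Fintype.card_pos_iff]
      omega
    rcases h1 : f.symm (e (Sum.inl a₀)) with α₀ | α₀ | β₁
    · exact (hA'.false α₀).elim
    · exact (hA'.false α₀).elim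
    · rcases h2 : f.symm (e (Sum.inr (Sum.inl a₀))) with α₀ | α₀ | β₂
      · exact (hA'.false α₀).elim
      · exact (hA'.false α₀).elim
      · exact gctr_gplace_kill e f b hb a₀ β₁ β₂ (f.symm_apply_eq.mp h1)
          (f.symm_apply_eq.mp h2) z
  | succ N IH =>
    intro ι A B A' B' _ _ _ _ _ _ _ _ _ _ e f b hb hN hAA z
    obtain ⟨a₀⟩ : Nonempty A := by
      rw [← Fintype.card_pos_iff]
      omega
    have main : ∀ (e₂ : (A ⊕ (A ⊕ B)) ≃ ι) (f₂ : (A' ⊕ (A' ⊕ B')) ≃ ι) (a₁ : A) (α₀ : A'),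
        e₂ (Sum.inr (Sum.inl a₁)) = f₂ (Sum.inr (Sum.inl α₀)) →
        gctr e₂ (gplace f₂ b) z = 0 := by
      intro e₂ f₂ a₁ α₀ hq2
      have hA'pos : 0 < Fintype.card A' := Fintype.card_pos_iff.mpr ⟨α₀⟩
      have hcard1 : Fintype.card {α : A' // α ≠ α₀} ≤ N := by
        rw [card_ne]
        omega
      have hcard2 : Fintype.card {α : A' // α ≠ α₀} < Fintype.card {a : A // a ≠ a₁} := by
        rw [card_ne, card_ne]
        omega
      by_cases hpp : f₂ (Sum.inl α₀) = e₂ (Sum.inl a₁)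
      · obtain ⟨e', f', hval⟩ := gctr_gplace_samePair e₂ f₂ b a₁ α₀ hq2 hpp z
        rw [hval, IH _ _ _ _ _ e' f' b hb hcard1 hcard2 z, mul_zero]
      · obtain ⟨e', f', hval⟩ := gctr_gplace_glue e₂ f₂ b a₁ α₀ hq2 hpp z
        rw [hval]
        exact IH _ _ _ _ _ e' f' b hb hcard1 hcard2 z
    rcases h2 : f.symm (e (Sum.inr (Sum.inl a₀))) with α₀ | α₀ | β₂
    · rw [← gplace_swap f α₀ b]
      apply main e _ a₀ α₀
      rw [Equiv.trans_apply, Equiv.swap_apply_right]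
      exact f.symm_apply_eq.mp h2
    · exact main e f a₀ α₀ (f.symm_apply_eq.mp h2)
    · rcases h1 : f.symm (e (Sum.inl a₀)) with α₀ | α₀ | β₁
      · rw [← gctr_swap e a₀ (gplace f b), ← gplace_swap f α₀ b]
        apply main _ _ a₀ α₀
        rw [Equiv.trans_apply, Equiv.swap_apply_right, Equiv.trans_apply,
          Equiv.swap_apply_right]
        exact f.symm_apply_eq.mp h1
      · rw [← gctr_swap e a₀ (gplace f b)]
        apply main _ f a₀ α₀
        rw [Equiv.trans_apply, Equiv.swap_apply_right]
        exact f.symm_apply_eq.mp h1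
      · exact gctr_gplace_kill e f b hb a₀ β₁ β₂ (f.symm_apply_eq.mp h1)
          (f.symm_apply_eq.mp h2) z

end Main

end Gen

lemma pairing_diag {n : ℕ} (t s : MinkTensor n) :
    pairing t s = ∑ μs : Fin n → Fin 4, (∏ i, η (μs i) (μs i)) * t μs * s μs := by
  unfold pairing
  refine Finset.sum_congr rfl fun μs _ => ?_
  refine Finset.sum_eq_single μs (fun νs _ hne => ?_) (by simp)
  have : ∃ i, μs i ≠ νs i := by
    by_contra hc
    push_neg at hc
    exact hne (funext fun i => hc i).symm
  obtain ⟨i, hi⟩ := this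
  rw [Finset.prod_eq_zero (Finset.mem_univ i) (η_off hi), zero_mul, zero_mul]

lemma sum_delta_fun {A : Type} [Fintype A] [DecidableEq A] (x : A → Fin 4)
    (G : (A → Fin 4) → ℝ) :
    ∑ y : A → Fin 4, (∏ a, (η (y a) (y a) * η (x a) (y a))) * G y = G x := by
  have hcoef : ∀ y : A → Fin 4, (∏ a, (η (y a) (y a) * η (x a) (y a))) =
      if y = x then 1 else 0 := by
    intro y
    by_cases h : y = x
    · subst h
      rw [if_pos rfl]
      exact Finset.prod_eq_one fun a _ => η_sq (y a)
    · rw [if_neg h]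
      have : ∃ a, y a ≠ x a := by
        by_contra hc
        push_neg at hc
        exact h (funext hc)
      obtain ⟨a, ha⟩ := this
      refine Finset.prod_eq_zero (Finset.mem_univ a) ?_
      rw [η_off (Ne.symm ha), mul_zero]
  rw [Finset.sum_congr rfl fun y _ => by rw [hcoef y]]
  simp

def tripleEquiv (A B : Type) :
    ((A → Fin 4) × ((A → Fin 4) × (B → Fin 4))) ≃ ((A ⊕ (A ⊕ B)) → Fin 4) where
  toFun w := Sum.elim w.1 (Sum.elim w.2.1 w.2.2)
  invFun h := (fun a => h (Sum.inl a), fun a => h (Sum.inr (Sum.inl a)),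
    fun j => h (Sum.inr (Sum.inr j)))
  left_inv w := rfl
  right_inv h := by
    funext w
    rcases w with a | a | j <;> rfl

lemma toIdx_eq_elim {n : ℕ} {A B : Type} (e : (A ⊕ (A ⊕ B)) ≃ Fin n) (x : A → Fin 4)
    (z : B → Fin 4) : toIdx e x z = (Sum.elim x (Sum.elim x z)) ∘ e.symm := by
  funext i
  unfold toIdx
  rcases h : e.symm i with a | a | j <;> simp [Function.comp, h]

lemma pairing_gplace {n : ℕ} {A B : Type} [Fintype A] [DecidableEq A] [Fintype B]
    [DecidableEq B] (e : (A ⊕ (A ⊕ B)) ≃ Fin n) (a : (B → Fin 4) → ℝ) (s : MinkTensor n) :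
    pairing (gplace e a) s =
      ∑ z : B → Fin 4, (∏ j, η (z j) (z j)) * (a z * gctr e s z) := by
  rw [pairing_diag]
  rw [← Equiv.sum_comp ((tripleEquiv A B).trans (Equiv.arrowCongr e (Equiv.refl (Fin 4))))]
  rw [Fintype.sum_prod_type]
  have hΨ : ∀ (x y : A → Fin 4) (z : B → Fin 4),
      ((tripleEquiv A B).trans (Equiv.arrowCongr e (Equiv.refl (Fin 4)))) (x, y, z) =
      (Sum.elim x (Sum.elim y z)) ∘ e.symm := by
    intro x y z
    rfl
  have hprod : ∀ h : (A ⊕ (A ⊕ B)) → Fin 4,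
      (∏ i : Fin n, η ((h ∘ e.symm) i) ((h ∘ e.symm) i)) =
      (∏ i : A, η (h (Sum.inl i)) (h (Sum.inl i))) *
        ((∏ i : A, η (h (Sum.inr (Sum.inl i))) (h (Sum.inr (Sum.inl i)))) *
          (∏ j : B, η (h (Sum.inr (Sum.inr j))) (h (Sum.inr (Sum.inr j))))) := by
    intro h
    rw [← Equiv.prod_comp e (fun i => η ((h ∘ e.symm) i) ((h ∘ e.symm) i))]
    simp only [Function.comp_apply, Equiv.symm_apply_apply]
    rw [Fintype.prod_sum_type]
    congr 1
    rw [Fintype.prod_sum_type]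
  have hgp : ∀ (x y : A → Fin 4) (z : B → Fin 4),
      gplace e a ((Sum.elim x (Sum.elim y z)) ∘ e.symm) =
        (∏ i : A, η (x i) (y i)) * a z := by
    intro x y z
    unfold gplace
    simp [Function.comp]
  have hinner : ∀ x : A → Fin 4,
      (∑ w : (A → Fin 4) × (B → Fin 4),
        (∏ i : Fin n,
            η ((Sum.elim x (Sum.elim w.1 w.2) ∘ e.symm) i)
              ((Sum.elim x (Sum.elim w.1 w.2) ∘ e.symm) i)) *
          gplace e a (Sum.elim x (Sum.elim w.1 w.2) ∘ e.symm) *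
          s (Sum.elim x (Sum.elim w.1 w.2) ∘ e.symm)) =
      ∑ z : B → Fin 4, (∏ j, η (z j) (z j)) *
        (a z * ((∏ i, η (x i) (x i)) * s (toIdx e x z))) := by
    intro x
    rw [Fintype.sum_prod_type, Finset.sum_comm]
    refine Finset.sum_congr rfl fun z _ => ?_
    have hterm : ∀ y : A → Fin 4,
        (∏ i : Fin n,
            η ((Sum.elim x (Sum.elim y z) ∘ e.symm) i)
              ((Sum.elim x (Sum.elim y z) ∘ e.symm) i)) *
          gplace e a (Sum.elim x (Sum.elim y z) ∘ e.symm) *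
          s (Sum.elim x (Sum.elim y z) ∘ e.symm) =
        ((∏ j, η (z j) (z j)) * (a z * (∏ i, η (x i) (x i)))) *
          ((∏ i, (η (y i) (y i) * η (x i) (y i))) *
            s (Sum.elim x (Sum.elim y z) ∘ e.symm)) := by
      intro y
      rw [hprod, hgp]
      simp only [Sum.elim_inl, Sum.elim_inr]
      rw [Finset.prod_mul_distrib]
      ring
    rw [Finset.sum_congr rfl fun y _ => hterm y, ← Finset.mul_sum,
      sum_delta_fun x (fun y => s (Sum.elim x (Sum.elim y z) ∘ e.symm)),
      ← toIdx_eq_elim]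
    ring
  rw [Finset.sum_congr rfl fun x _ => by rw [Finset.sum_congr rfl
    (fun w _ => by rw [hΨ x w.1 w.2]), hinner x]]
  rw [Finset.sum_comm]
  refine Finset.sum_congr rfl fun z _ => ?_
  unfold gctr
  rw [Finset.mul_sum, Finset.mul_sum]

lemma pairing_add_left {n : ℕ} (t₁ t₂ s : MinkTensor n) :
    pairing (t₁ + t₂) s = pairing t₁ s + pairing t₂ s := by
  unfold pairing
  rw [← Finset.sum_add_distrib]
  refine Finset.sum_congr rfl fun μ _ => ?_
  rw [← Finset.sum_add_distrib]
  refine Finset.sum_congr rfl fun ν _ => ?_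
  simp only [Pi.add_apply]
  ring

lemma pairing_smul_left {n : ℕ} (r : ℝ) (t s : MinkTensor n) :
    pairing (r • t) s = r * pairing t s := by
  unfold pairing
  rw [Finset.mul_sum]
  refine Finset.sum_congr rfl fun μ _ => ?_
  rw [Finset.mul_sum]
  refine Finset.sum_congr rfl fun ν _ => ?_
  simp only [Pi.smul_apply, smul_eq_mul]
  ring

lemma pairing_zero_left {n : ℕ} (s : MinkTensor n) : pairing 0 s = 0 := by
  unfold pairing
  simp

lemma pairing_comm {n : ℕ} (t s : MinkTensor n) : pairing t s = pairing s t := by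
  rw [pairing_diag, pairing_diag]
  refine Finset.sum_congr rfl fun μ _ => ?_
  ring

lemma gen_orth {n k l : ℕ} (hlk : l < k) (e : PairSplit n k) (f : PairSplit n l)
    (a : MinkTensor (n - 2 * k)) (b : MinkTensor (n - 2 * l)) (hb : Traceless b) :
    pairing (place k e a) (place l f b) = 0 := by
  have h1 : place k e a = gplace e a := rfl
  have h2 : place l f b = gplace f b := rfl
  rw [h1, h2, pairing_gplace]
  refine Finset.sum_eq_zero fun z _ => ?_
  rw [key_induction l (Fin n) (Fin k) (Fin (n - 2 * k)) (Fin l) (Fin (n - 2 * l)) e f b hb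
    (by simp) (by simp [hlk]) z]
  ring

lemma orth_aux {n k l : ℕ} (hlk : l < k) (t s : MinkTensor n)
    (ht : t ∈ stratum n k) (hs : s ∈ stratum n l) : pairing t s = 0 := by
  induction ht using Submodule.span_induction with
  | mem x hx =>
    obtain ⟨e, a, _, rfl⟩ := hx
    induction hs using Submodule.span_induction with
    | mem y hy =>
      obtain ⟨f, b, hb, rfl⟩ := hy
      exact gen_orth hlk e f a b hb
    | zero => rw [pairing_comm, pairing_zero_left]
    | add u v hu hv ihu ihv => rw [pairing_comm, pairing_add_left, pairing_comm u,
        pairing_comm v, ihu, ihv, add_zero]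
    | smul r u hu ihu => rw [pairing_comm, pairing_smul_left, pairing_comm, ihu, mul_zero]
  | zero => rw [pairing_zero_left]
  | add u v hu hv ihu ihv => rw [pairing_add_left, ihu, ihv, add_zero]
  | smul r u hu ihu => rw [pairing_smul_left, ihu, mul_zero]

end MinkTensors


/-!  STATEMENT 17.
Orthogonality of trace strata: distinct strata `T^n_k` and `T^n_l` are orthogonal for the
`η`-pairing. -/

open MinkTensors in
theorem strata_orthogonal {n k l : ℕ}
    (hk : 2 * k ≤ n) (hl : 2 * l ≤ n) (hkl : k ≠ l)
    (t s : MinkTensor n) (ht : t ∈ stratum n k) (hs : s ∈ stratum n l) :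
    pairing t s = 0 := by
  rcases hkl.lt_or_gt with h | h
  · rw [MinkTensors.pairing_comm]
    exact MinkTensors.orth_aux h s t hs ht
  · exact MinkTensors.orth_aux h t s ht hs
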